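/- Let M be any of the matrices M_{Q_1}, M_{Q_2}, or M_{Q^{(i)}} (1 ≤ i ≤ n-1) over ℤ[z_1,…,z_{2n-1}]. Then for every 1 ≤ α ≤ n there exists ε ∈ {1,-1} such that the determinant of the northwest (2n+2-α)×(2n+2-α) submatrix of M equals ε times the determinant of the northwest α×α submatrix of M. (The 'minors agree up to sign' observation used in the proofs of Propositions 2, 3, and 4.) -/

import Mathlib

open Matrix MvPolynomial

/-- For `1 ≤ α ≤ n`, the `(2n+2) × (2n+2)` identity matrix modified by replacing the
`2 × 2` diagonal block in rows/columns `{α, α+1}` (1-based) by `[[-z,1],[1,0]]` and the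
`2 × 2` diagonal block in rows/columns `{2n+2-α, 2n+3-α}` by `[[z,1],[1,0]]`; for
`α = 0`, the identity matrix with the central `4 × 4` diagonal block in rows/columns
`{n, n+1, n+2, n+3}` replaced by `[[-z,0,1,0],[0,z,0,1],[1,0,0,0],[0,1,0,0]]`. -/
def gMat {R : Type*} [CommRing R] (n : ℕ) (α : ℕ) (z : R) :
    Matrix (Fin (2 * n + 2)) (Fin (2 * n + 2)) R :=
  Matrix.of fun i j =>
    let i' := (i : ℕ) + 1
    let j' := (j : ℕ) + 1
    if α = 0 then
      if i' = n ∧ j' = n then -z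
      else if i' = n + 1 ∧ j' = n + 1 then z
      else if (i' = n ∧ j' = n + 2) ∨ (i' = n + 1 ∧ j' = n + 3) ∨
              (i' = n + 2 ∧ j' = n) ∨ (i' = n + 3 ∧ j' = n + 1) then 1
      else if i' = j' ∧ ¬(i' = n ∨ i' = n + 1 ∨ i' = n + 2 ∨ i' = n + 3) then 1
      else 0
    else
      if i' = α ∧ j' = α then -z
      else if i' = 2 * n + 2 - α ∧ j' = 2 * n + 2 - α then z
      else if (i' = α ∧ j' = α + 1) ∨ (i' = α + 1 ∧ j' = α) ∨
              (i' = 2 * n + 2 - α ∧ j' = 2 * n + 3 - α) ∨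
              (i' = 2 * n + 3 - α ∧ j' = 2 * n + 2 - α) then 1
      else if i' = j' ∧
          ¬(i' = α ∨ i' = α + 1 ∨ i' = 2 * n + 2 - α ∨ i' = 2 * n + 3 - α) then 1
      else 0

/-- The descending word `(a, a-1, …, b)`. -/
def descWord (a b : ℕ) : List ℕ := (List.range (a + 1 - b)).reverse.map (· + b)

/-- The ascending word `(a, a+1, …, b)`. -/
def ascWord (a b : ℕ) : List ℕ := (List.range (b + 1 - a)).map (· + a)

/-- `Q_1 = (0, n-1, n-2, …, 2, 1, 2, 3, …, n-1, 0)`. -/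
def wordQ1 (n : ℕ) : List ℕ := 0 :: (descWord (n - 1) 1 ++ ascWord 2 (n - 1) ++ [0])

/-- `Q_2 = (n, n-1, …, 2, 1, 2, …, n-1, n)`. -/
def wordQ2 (n : ℕ) : List ℕ := descWord n 1 ++ ascWord 2 n

/-- `Q^{(i)} = (i, i-1, …, 1, 2, 3, …, n-1, 0, n, n-1, …, i+1)`. -/
def wordQi (n i : ℕ) : List ℕ :=
  descWord i 1 ++ ascWord 2 (n - 1) ++ [0] ++ descWord n (i + 1)

/-- `M_Q = g_{α_1}(z_1) · g_{α_2}(z_2) ⋯ g_{α_L}(z_L)` over `ℤ[z_1, z_2, …]`,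
where `z_j` is the variable `X j`. -/
noncomputable def MQ (n : ℕ) (Q : List ℕ) :
    Matrix (Fin (2 * n + 2)) (Fin (2 * n + 2)) (MvPolynomial ℕ ℤ) :=
  (List.ofFn (fun l : Fin Q.length => gMat n (Q.get l) (X ((l : ℕ) + 1)))).prod

/-- The determinant of the northwest `α × α` submatrix. -/
noncomputable def nwDet {n : ℕ}
    (M : Matrix (Fin (2 * n + 2)) (Fin (2 * n + 2)) (MvPolynomial ℕ ℤ))
    (α : ℕ) (h : α ≤ 2 * n + 2) : MvPolynomial ℕ ℤ :=
  (M.submatrix (Fin.castLE h) (Fin.castLE h)).det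



set_option maxHeartbeats 1000000

-- ===== auxiliary development =====
section Aux

/-- The antidiagonal reversal matrix. -/
def revJ (N : ℕ) (R : Type*) [CommRing R] : Matrix (Fin N) (Fin N) R :=
  Matrix.of fun i j => if (i : ℕ) + (j : ℕ) = N - 1 then 1 else 0

variable {R : Type*} [CommRing R] {N : ℕ}

lemma revJ_apply (i j : Fin N) :
    revJ N R i j = if j = Fin.rev i then (1:R) else 0 := by
  have hi := i.isLt; have hj := j.isLt
  simp only [revJ, Matrix.of_apply]
  by_cases h : (i:ℕ) + (j:ℕ) = N - 1
  · rw [if_pos h, if_pos]; ext; rw [Fin.val_rev]; omega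
  · rw [if_neg h, if_neg]; intro he; apply h; rw [he, Fin.val_rev]; omega

lemma mul_revJ (A : Matrix (Fin N) (Fin N) R) (i l : Fin N) :
    (A * revJ N R) i l = A i (Fin.rev l) := by
  rw [Matrix.mul_apply]
  have : ∀ k : Fin N, A i k * revJ N R k l = if k = Fin.rev l then A i k else 0 := by
    intro k
    rw [revJ_apply]
    by_cases h : k = Fin.rev l
    · rw [if_pos h, if_pos, mul_one]
      rw [h, Fin.rev_rev]
    · rw [if_neg h, if_neg, mul_zero]
      intro he; apply h; rw [he, Fin.rev_rev]
  rw [Finset.sum_congr rfl (fun k _ => this k), Finset.sum_ite_eq' Finset.univ (Fin.rev l)]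
  simp

lemma revJ_mul (A : Matrix (Fin N) (Fin N) R) (i l : Fin N) :
    (revJ N R * A) i l = A (Fin.rev i) l := by
  rw [Matrix.mul_apply]
  have : ∀ k : Fin N, revJ N R i k * A k l = if k = Fin.rev i then A k l else 0 := by
    intro k
    rw [revJ_apply]
    by_cases h : k = Fin.rev i
    · rw [if_pos h, if_pos h, one_mul]
    · rw [if_neg h, if_neg h, zero_mul]
  rw [Finset.sum_congr rfl (fun k _ => this k), Finset.sum_ite_eq' Finset.univ (Fin.rev i)]
  simp

lemma revJ_mul_revJ : (revJ N R) * (revJ N R) = 1 := by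
  ext i j
  rw [mul_revJ, revJ_apply, Matrix.one_apply]
  by_cases h : i = j
  · rw [if_pos h, if_pos (by rw [h])]
  · rw [if_neg, if_neg h]; intro he; apply h; exact Fin.rev_injective he.symm

lemma jacobi_aux {k l : ℕ} (M M' : Matrix (Fin k ⊕ Fin l) (Fin k ⊕ Fin l) R)
    (h : M * M' = 1) :
    M.toBlocks₁₁.det = M.det * M'.toBlocks₂₂.det := by
  have hprod : M * M' = Matrix.fromBlocks
      (M.toBlocks₁₁ * M'.toBlocks₁₁ + M.toBlocks₁₂ * M'.toBlocks₂₁)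
      (M.toBlocks₁₁ * M'.toBlocks₁₂ + M.toBlocks₁₂ * M'.toBlocks₂₂)
      (M.toBlocks₂₁ * M'.toBlocks₁₁ + M.toBlocks₂₂ * M'.toBlocks₂₁)
      (M.toBlocks₂₁ * M'.toBlocks₁₂ + M.toBlocks₂₂ * M'.toBlocks₂₂) := by
    conv_lhs => rw [← Matrix.fromBlocks_toBlocks M, ← Matrix.fromBlocks_toBlocks M']
    rw [Matrix.fromBlocks_multiply]
  rw [h, ← Matrix.fromBlocks_one] at hprod
  have h12 : M.toBlocks₁₁ * M'.toBlocks₁₂ + M.toBlocks₁₂ * M'.toBlocks₂₂ = 0 := by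
    have := congrArg Matrix.toBlocks₁₂ hprod.symm
    rw [Matrix.toBlocks_fromBlocks₁₂] at this
    rw [this, Matrix.toBlocks_fromBlocks₁₂]
  have h22 : M.toBlocks₂₁ * M'.toBlocks₁₂ + M.toBlocks₂₂ * M'.toBlocks₂₂ = 1 := by
    have := congrArg Matrix.toBlocks₂₂ hprod.symm
    rw [Matrix.toBlocks_fromBlocks₂₂] at this
    rw [this, Matrix.toBlocks_fromBlocks₂₂]
  have key : M * Matrix.fromBlocks 1 (M'.toBlocks₁₂) 0 (M'.toBlocks₂₂) =
      Matrix.fromBlocks (M.toBlocks₁₁) 0 (M.toBlocks₂₁) 1 := by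
    conv_lhs => rw [← Matrix.fromBlocks_toBlocks M]
    rw [Matrix.fromBlocks_multiply, h12, h22, Matrix.mul_one, Matrix.mul_one,
      Matrix.mul_zero, Matrix.mul_zero, add_zero, add_zero]
  have := congrArg Matrix.det key
  rw [Matrix.det_mul, Matrix.det_fromBlocks_zero₂₁, Matrix.det_fromBlocks_zero₁₂] at this
  simp only [Matrix.det_one, one_mul, mul_one] at this
  exact this.symm

lemma form_preserving (s : ℕ → ℕ) (d : ℕ → R) (g : Matrix (Fin N) (Fin N) R)
    (hs_lt : ∀ v, v < N → s v < N)
    (hg : ∀ i k : Fin N, g i k =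
      (if (k:ℕ) = s i then 1 else 0) + (if (k:ℕ) = (i:ℕ) then d i else 0))
    (hinv : ∀ v, v < N → s (s v) = v)
    (hcomm : ∀ v, v < N → s (N - 1 - v) = N - 1 - s v)
    (hd0 : ∀ v, v < N → d v * d (N - 1 - v) = 0)
    (hdneg : ∀ v, v < N → d (s (N - 1 - v)) = - d v) :
    g * revJ N R * gᵀ = revJ N R := by
  ext i j
  have hi := i.isLt
  have hj := j.isLt
  have hsi := hs_lt i hi
  have hsj := hs_lt j hj
  have step1 : (g * revJ N R * gᵀ) i j = ∑ l : Fin N, g i (Fin.rev l) * g j l := by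
    rw [Matrix.mul_apply]
    apply Finset.sum_congr rfl
    intro l _
    rw [mul_revJ, Matrix.transpose_apply]
  rw [step1]
  have hu : N - 1 - s (i:ℕ) < N := by omega
  set u : Fin N := ⟨N - 1 - s (i:ℕ), hu⟩ with hu_def
  have hval : (u:ℕ) = N - 1 - s (i:ℕ) := rfl
  have expand : ∀ l : Fin N, g i (Fin.rev l) =
      (if l = u then 1 else 0) + (if l = Fin.rev i then d i else 0) := by
    intro l
    rw [hg]
    congr 1
    · by_cases h : ((Fin.rev l : ℕ)) = s (i:ℕ)
      · rw [if_pos h, if_pos]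
        ext
        rw [Fin.val_rev] at h
        rw [hval]
        omega
      · rw [if_neg h, if_neg]
        intro he
        apply h
        have := congrArg Fin.val he
        rw [Fin.val_rev] at *
        omega
    · by_cases h : ((Fin.rev l : ℕ)) = (i:ℕ)
      · rw [if_pos h, if_pos]
        ext
        rw [Fin.val_rev] at h
        rw [Fin.val_rev]
        omega
      · rw [if_neg h, if_neg]
        intro he
        apply h
        have := congrArg Fin.val he
        rw [Fin.val_rev] at *
        omega
  calc ∑ l : Fin N, g i (Fin.rev l) * g j l
      = ∑ l : Fin N, ((if l = u then g j l else 0) +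
          (if l = Fin.rev i then d i * g j l else 0)) := by
        apply Finset.sum_congr rfl
        intro l _
        simp [expand l, add_mul, ite_mul]
    _ = g j u + d (i:ℕ) * g j (Fin.rev i) := by
        rw [Finset.sum_add_distrib, Finset.sum_ite_eq' Finset.univ u,
          Finset.sum_ite_eq' Finset.univ (Fin.rev i)]
        simp
    _ = revJ N R i j := by
        rw [hg, hg]
        simp only [revJ, Matrix.of_apply, Fin.val_rev, hval]
        set vi := (i:ℕ) with hvi
        set vj := (j:ℕ) with hvj
        have hci := hcomm vi hi
        have hcsi := hcomm (s vi) hsi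
        have hii := hinv vi hi
        have hij := hinv vj hj
        have hd0i := hd0 vi hi
        have hdni := hdneg vi hi
        by_cases hA : vj = N - 1 - vi
        · have c1 : N - 1 - s vi = s vj := by rw [hA, hci]
          have hsvj : s vj = N - 1 - s vi := by rw [hA, hci]
          rw [if_pos c1, if_pos (show vi + vj = N - 1 by omega)]
          by_cases hfix : s vi = vi
          · have c2 : N - 1 - s vi = vj := by omega
            have c3 : N - (vi + 1) = s vj := by omega
            have c4 : N - (vi + 1) = vj := by omega
            rw [if_pos c2, if_pos c3, if_pos c4]
            have e1 : d vj = - d vi := by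
              have h5 : s (N - 1 - vi) = vj := by omega
              rw [← h5]
              exact hdni
            have e2 : d vi * d vj = 0 := by rw [hA]; exact hd0i
            linear_combination e1 + e2
          · have c2 : ¬(N - 1 - s vi = vj) := by omega
            have c3 : ¬(N - (vi + 1) = s vj) := by omega
            have c4 : N - (vi + 1) = vj := by omega
            rw [if_neg c2, if_neg c3, if_pos c4]
            have e2 : d vi * d vj = 0 := by rw [hA]; exact hd0i
            linear_combination e2
        · rw [if_neg (show ¬(vi + vj = N - 1) by omega)]
          by_cases hB : vj = N - 1 - s vi
          · have hsvj : s vj = N - 1 - vi := by rw [hB, hcsi, hii]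
            have c1 : ¬(N - 1 - s vi = s vj) := by omega
            have c2 : N - 1 - s vi = vj := by omega
            have c3 : N - (vi + 1) = s vj := by omega
            have c4 : ¬(N - (vi + 1) = vj) := by omega
            rw [if_neg c1, if_pos c2, if_pos c3, if_neg c4]
            have e1 : d vj = - d vi := by
              rw [hB, ← hci]
              exact hdni
            linear_combination e1
          · have hsvj' : ¬(s vj = N - 1 - vi) := by
              intro h
              apply hB
              rw [← hij, h, hci]
            have c1 : ¬(N - 1 - s vi = s vj) := by
              intro h
              apply hA
              rw [← hij, ← h, hcsi, hii]
            have c2 : ¬(N - 1 - s vi = vj) := by omega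
            have c3 : ¬(N - (vi + 1) = s vj) := by omega
            have c4 : ¬(N - (vi + 1) = vj) := by omega
            rw [if_neg c1, if_neg c2, if_neg c3, if_neg c4]
            ring

lemma prod_form_preserving :
    ∀ L : List (Matrix (Fin N) (Fin N) R),
      (∀ A ∈ L, A * revJ N R * Aᵀ = revJ N R) →
      L.prod * revJ N R * L.prodᵀ = revJ N R := by
  intro L
  induction L with
  | nil => intro _; simp
  | cons g L ih =>
    intro h
    have hg := h g List.mem_cons_self
    have hL := ih (fun A hA => h A (List.mem_cons_of_mem _ hA))
    rw [List.prod_cons, Matrix.transpose_mul]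
    calc g * L.prod * revJ N R * (L.prodᵀ * gᵀ)
        = g * (L.prod * revJ N R * L.prodᵀ) * gᵀ := by
          simp only [Matrix.mul_assoc]
      _ = revJ N R := by rw [hL]; exact hg

end Aux

def sFun0 (n : ℕ) : ℕ → ℕ := fun v =>
  if v = n - 1 then n + 1 else if v = n + 1 then n - 1
  else if v = n then n + 2 else if v = n + 2 then n else v

def sFunP (n β : ℕ) : ℕ → ℕ := fun v =>
  if v = β - 1 then β else if v = β then β - 1
  else if v = 2 * n + 1 - β then 2 * n + 2 - β
  else if v = 2 * n + 2 - β then 2 * n + 1 - β else v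

def sFun (n β : ℕ) : ℕ → ℕ := if β = 0 then sFun0 n else sFunP n β

def dFun0 {R : Type*} [CommRing R] (n : ℕ) (z : R) : ℕ → R := fun v =>
  if v = n - 1 then -z else if v = n then z else 0

def dFunP {R : Type*} [CommRing R] (n β : ℕ) (z : R) : ℕ → R := fun v =>
  if v = β - 1 then -z else if v = 2 * n + 1 - β then z else 0

def dFun {R : Type*} [CommRing R] (n β : ℕ) (z : R) : ℕ → R :=
  if β = 0 then dFun0 n z else dFunP n β z

lemma sFun0_spec (n v : ℕ) :
    (v = n - 1 ∧ sFun0 n v = n + 1) ∨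
    (v ≠ n - 1 ∧ v = n + 1 ∧ sFun0 n v = n - 1) ∨
    (v ≠ n - 1 ∧ v ≠ n + 1 ∧ v = n ∧ sFun0 n v = n + 2) ∨
    (v ≠ n - 1 ∧ v ≠ n + 1 ∧ v ≠ n ∧ v = n + 2 ∧ sFun0 n v = n) ∨
    (v ≠ n - 1 ∧ v ≠ n + 1 ∧ v ≠ n ∧ v ≠ n + 2 ∧ sFun0 n v = v) := by
  simp only [sFun0]
  split_ifs with h1 h2 h3 h4
  · exact Or.inl ⟨h1, rfl⟩
  · exact Or.inr (Or.inl ⟨h1, h2, rfl⟩)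
  · exact Or.inr (Or.inr (Or.inl ⟨h1, h2, h3, rfl⟩))
  · exact Or.inr (Or.inr (Or.inr (Or.inl ⟨h1, h2, h3, h4, rfl⟩)))
  · exact Or.inr (Or.inr (Or.inr (Or.inr ⟨h1, h2, h3, h4, rfl⟩)))

lemma sFunP_spec (n β v : ℕ) :
    (v = β - 1 ∧ sFunP n β v = β) ∨
    (v ≠ β - 1 ∧ v = β ∧ sFunP n β v = β - 1) ∨
    (v ≠ β - 1 ∧ v ≠ β ∧ v = 2 * n + 1 - β ∧ sFunP n β v = 2 * n + 2 - β) ∨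
    (v ≠ β - 1 ∧ v ≠ β ∧ v ≠ 2 * n + 1 - β ∧ v = 2 * n + 2 - β ∧
      sFunP n β v = 2 * n + 1 - β) ∨
    (v ≠ β - 1 ∧ v ≠ β ∧ v ≠ 2 * n + 1 - β ∧ v ≠ 2 * n + 2 - β ∧ sFunP n β v = v) := by
  simp only [sFunP]
  split_ifs with h1 h2 h3 h4
  · exact Or.inl ⟨h1, rfl⟩
  · exact Or.inr (Or.inl ⟨h1, h2, rfl⟩)
  · exact Or.inr (Or.inr (Or.inl ⟨h1, h2, h3, rfl⟩))
  · exact Or.inr (Or.inr (Or.inr (Or.inl ⟨h1, h2, h3, h4, rfl⟩)))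
  · exact Or.inr (Or.inr (Or.inr (Or.inr ⟨h1, h2, h3, h4, rfl⟩)))

lemma dFun0_spec {R : Type*} [CommRing R] (n : ℕ) (z : R) (v : ℕ) :
    (v = n - 1 ∧ dFun0 n z v = -z) ∨
    (v ≠ n - 1 ∧ v = n ∧ dFun0 n z v = z) ∨
    (v ≠ n - 1 ∧ v ≠ n ∧ dFun0 n z v = 0) := by
  simp only [dFun0]
  split_ifs with h1 h2
  · exact Or.inl ⟨h1, rfl⟩
  · exact Or.inr (Or.inl ⟨h1, h2, rfl⟩)
  · exact Or.inr (Or.inr ⟨h1, h2, rfl⟩)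

lemma dFunP_spec {R : Type*} [CommRing R] (n β : ℕ) (z : R) (v : ℕ) :
    (v = β - 1 ∧ dFunP n β z v = -z) ∨
    (v ≠ β - 1 ∧ v = 2 * n + 1 - β ∧ dFunP n β z v = z) ∨
    (v ≠ β - 1 ∧ v ≠ 2 * n + 1 - β ∧ dFunP n β z v = 0) := by
  simp only [dFunP]
  split_ifs with h1 h2
  · exact Or.inl ⟨h1, rfl⟩
  · exact Or.inr (Or.inl ⟨h1, h2, rfl⟩)
  · exact Or.inr (Or.inr ⟨h1, h2, rfl⟩)

lemma sFun0_lt (n : ℕ) (hn : 2 ≤ n) : ∀ v, v < 2 * n + 2 → sFun0 n v < 2 * n + 2 := by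
  intro v hv; have := sFun0_spec n v; omega

lemma sFunP_lt (n β : ℕ) (hn : 2 ≤ n) (hβ1 : 1 ≤ β) (hβ : β ≤ n) :
    ∀ v, v < 2 * n + 2 → sFunP n β v < 2 * n + 2 := by
  intro v hv; have := sFunP_spec n β v; omega

lemma sFun0_inv (n : ℕ) (hn : 2 ≤ n) : ∀ v, v < 2 * n + 2 → sFun0 n (sFun0 n v) = v := by
  intro v hv
  have h1 := sFun0_spec n v
  have h2 := sFun0_spec n (sFun0 n v)
  omega

lemma sFunP_inv (n β : ℕ) (hn : 2 ≤ n) (hβ1 : 1 ≤ β) (hβ : β ≤ n) :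
    ∀ v, v < 2 * n + 2 → sFunP n β (sFunP n β v) = v := by
  intro v hv
  have h1 := sFunP_spec n β v
  have h2 := sFunP_spec n β (sFunP n β v)
  omega

lemma sFun0_comm (n : ℕ) (hn : 2 ≤ n) :
    ∀ v, v < 2 * n + 2 → sFun0 n (2 * n + 2 - 1 - v) = 2 * n + 2 - 1 - sFun0 n v := by
  intro v hv
  have h1 := sFun0_spec n v
  have h2 := sFun0_spec n (2 * n + 2 - 1 - v)
  omega

lemma sFunP_comm (n β : ℕ) (hn : 2 ≤ n) (hβ1 : 1 ≤ β) (hβ : β ≤ n) :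
    ∀ v, v < 2 * n + 2 → sFunP n β (2 * n + 2 - 1 - v) = 2 * n + 2 - 1 - sFunP n β v := by
  intro v hv
  have h1 := sFunP_spec n β v
  have h2 := sFunP_spec n β (2 * n + 2 - 1 - v)
  omega

lemma dFun0_mul {R : Type*} [CommRing R] (n : ℕ) (hn : 2 ≤ n) (z : R) :
    ∀ v, v < 2 * n + 2 → dFun0 n z v * dFun0 n z (2 * n + 2 - 1 - v) = 0 := by
  intro v hv
  have h1 := dFun0_spec n z v
  have h2 := dFun0_spec n z (2 * n + 2 - 1 - v)
  rcases h1 with ⟨hv1, e1⟩ | ⟨hv1, hv2, e1⟩ | ⟨hv1, hv2, e1⟩ <;>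
    rcases h2 with ⟨hw1, e2⟩ | ⟨hw1, hw2, e2⟩ | ⟨hw1, hw2, e2⟩ <;>
    rw [e1, e2] <;> first | ring1 | (exfalso; omega)

lemma dFunP_mul {R : Type*} [CommRing R] (n β : ℕ) (hn : 2 ≤ n) (hβ1 : 1 ≤ β) (hβ : β ≤ n) (z : R) :
    ∀ v, v < 2 * n + 2 → dFunP n β z v * dFunP n β z (2 * n + 2 - 1 - v) = 0 := by
  intro v hv
  have h1 := dFunP_spec n β z v
  have h2 := dFunP_spec n β z (2 * n + 2 - 1 - v)
  rcases h1 with ⟨hv1, e1⟩ | ⟨hv1, hv2, e1⟩ | ⟨hv1, hv2, e1⟩ <;>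
    rcases h2 with ⟨hw1, e2⟩ | ⟨hw1, hw2, e2⟩ | ⟨hw1, hw2, e2⟩ <;>
    rw [e1, e2] <;> first | ring1 | (exfalso; omega)

lemma dFun0_neg {R : Type*} [CommRing R] (n : ℕ) (hn : 2 ≤ n) (z : R) :
    ∀ v, v < 2 * n + 2 → dFun0 n z (sFun0 n (2 * n + 2 - 1 - v)) = - dFun0 n z v := by
  intro v hv
  have h1 := dFun0_spec n z v
  have h2 := dFun0_spec n z (sFun0 n (2 * n + 2 - 1 - v))
  have h3 := sFun0_spec n (2 * n + 2 - 1 - v)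
  rcases h1 with ⟨hv1, e1⟩ | ⟨hv1, hv2, e1⟩ | ⟨hv1, hv2, e1⟩ <;>
    rcases h2 with ⟨hw1, e2⟩ | ⟨hw1, hw2, e2⟩ | ⟨hw1, hw2, e2⟩ <;>
    rw [e1, e2] <;> first | ring1 | (exfalso; omega)

lemma dFunP_neg {R : Type*} [CommRing R] (n β : ℕ) (hn : 2 ≤ n) (hβ1 : 1 ≤ β) (hβ : β ≤ n) (z : R) :
    ∀ v, v < 2 * n + 2 → dFunP n β z (sFunP n β (2 * n + 2 - 1 - v)) = - dFunP n β z v := by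
  intro v hv
  have h1 := dFunP_spec n β z v
  have h2 := dFunP_spec n β z (sFunP n β (2 * n + 2 - 1 - v))
  have h3 := sFunP_spec n β (2 * n + 2 - 1 - v)
  rcases h1 with ⟨hv1, e1⟩ | ⟨hv1, hv2, e1⟩ | ⟨hv1, hv2, e1⟩ <;>
    rcases h2 with ⟨hw1, e2⟩ | ⟨hw1, hw2, e2⟩ | ⟨hw1, hw2, e2⟩ <;>
    rw [e1, e2] <;> first | ring1 | (exfalso; omega)

lemma gMat_entry0 {R : Type*} [CommRing R] (n : ℕ) (hn : 2 ≤ n) (z : R) :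
    ∀ i k : Fin (2 * n + 2), gMat n 0 z i k =
      (if (k:ℕ) = sFun0 n i then 1 else 0) +
      (if (k:ℕ) = (i:ℕ) then dFun0 n z i else 0) := by
  intro i k
  have hi := i.isLt
  have hk := k.isLt
  simp only [gMat, sFun0, dFun0, Matrix.of_apply, if_pos rfl]
  split_ifs <;> first | rfl | omega | ring1 | (exfalso; omega)

lemma gMat_entryP {R : Type*} [CommRing R] (n β : ℕ) (hn : 2 ≤ n) (hβ1 : 1 ≤ β) (hβ : β ≤ n) (z : R) :
    ∀ i k : Fin (2 * n + 2), gMat n β z i k =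
      (if (k:ℕ) = sFunP n β i then 1 else 0) +
      (if (k:ℕ) = (i:ℕ) then dFunP n β z i else 0) := by
  intro i k
  have hi := i.isLt
  have hk := k.isLt
  have hβ0 : ¬(β = 0) := by omega
  simp only [gMat, sFunP, dFunP, Matrix.of_apply, if_neg hβ0]
  split_ifs <;> first | rfl | omega | ring1 | (exfalso; omega)

section Gen

variable {R : Type*} [CommRing R]

lemma gMat_form (n β : ℕ) (hn : 2 ≤ n) (hβ : β ≤ n) (z : R) :
    gMat n β z * revJ (2 * n + 2) R * (gMat n β z)ᵀ = revJ (2 * n + 2) R := by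
  rcases Nat.eq_zero_or_pos β with hb | hb
  · subst hb
    exact form_preserving (sFun0 n) (dFun0 n z) (gMat n 0 z)
      (sFun0_lt n hn) (gMat_entry0 n hn z) (sFun0_inv n hn) (sFun0_comm n hn)
      (dFun0_mul n hn z) (dFun0_neg n hn z)
  · exact form_preserving (sFunP n β) (dFunP n β z) (gMat n β z)
      (sFunP_lt n β hn hb hβ) (gMat_entryP n β hn hb hβ z) (sFunP_inv n β hn hb hβ)
      (sFunP_comm n β hn hb hβ) (dFunP_mul n β hn hb hβ z) (dFunP_neg n β hn hb hβ z)

end Gen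

section Words

lemma descWord_le {a b x : ℕ} (hx : x ∈ descWord a b) : x ≤ a := by
  simp only [descWord, List.mem_map, List.mem_reverse, List.mem_range] at hx
  obtain ⟨y, hy, rfl⟩ := hx
  omega

lemma ascWord_le {a b x : ℕ} (hx : x ∈ ascWord a b) : x ≤ b := by
  simp only [ascWord, List.mem_map, List.mem_range] at hx
  obtain ⟨y, hy, rfl⟩ := hx
  omega

lemma word_letters_le (n : ℕ) (hn : 2 ≤ n) (Q : List ℕ)
    (hQ : Q = wordQ1 n ∨ Q = wordQ2 n ∨ ∃ i, 1 ≤ i ∧ i ≤ n - 1 ∧ Q = wordQi n i) :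
    ∀ x ∈ Q, x ≤ n := by
  intro x hx
  rcases hQ with rfl | rfl | ⟨i, hi1, hi2, rfl⟩
  · simp only [wordQ1, List.mem_cons, List.mem_append, List.mem_singleton] at hx
    rcases hx with rfl | (h | h) | rfl | h
    · omega
    · have := descWord_le h; omega
    · have := ascWord_le h; omega
    · omega
    · exact absurd h List.not_mem_nil
  · simp only [wordQ2, List.mem_append] at hx
    rcases hx with h | h
    · exact descWord_le h
    · exact ascWord_le h
  · simp only [wordQi, List.mem_append, List.mem_singleton] at hx
    rcases hx with ((h | h) | rfl) | h
    · have := descWord_le h; omega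
    · have := ascWord_le h; omega
    · omega
    · exact descWord_le h

end Words

/-- for `M` any of `M_{Q_1}`, `M_{Q_2}`, `M_{Q^{(i)}}` (`1 ≤ i ≤ n-1`) and
`1 ≤ α ≤ n`, the determinant of the northwest `(2n+2-α) × (2n+2-α)` submatrix of `M`
equals the determinant of the northwest `α × α` submatrix of `M` up to a sign
`ε ∈ {1,-1}`. -/
theorem nwDet_compl_eq_sign_mul_nwDet (n : ℕ) (hn : 2 ≤ n) (Q : List ℕ)
    (hQ : Q = wordQ1 n ∨ Q = wordQ2 n ∨ ∃ i, 1 ≤ i ∧ i ≤ n - 1 ∧ Q = wordQi n i)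
    (α : ℕ) (hα1 : 1 ≤ α) (hαn : α ≤ n) :
    ∃ ε : MvPolynomial ℕ ℤ, (ε = 1 ∨ ε = -1) ∧
      nwDet (MQ n Q) (2 * n + 2 - α) (by omega) = ε * nwDet (MQ n Q) α (by omega) := by
  set R := MvPolynomial ℕ ℤ with hR
  set N := 2 * n + 2 with hN
  set M : Matrix (Fin N) (Fin N) R := MQ n Q with hMdef
  set J : Matrix (Fin N) (Fin N) R := revJ N R with hJdef
  have hletters := word_letters_le n hn Q hQ
  -- the form is preserved by M
  have hM : M * J * Mᵀ = J := by
    apply prod_form_preserving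
    intro A hA
    rw [List.mem_ofFn] at hA
    obtain ⟨l, rfl⟩ := hA
    exact gMat_form n (Q.get l) hn (hletters _ (by simpa using List.get_mem Q l.val l.isLt)) _
  -- M is invertible with explicit inverse
  set M' : Matrix (Fin N) (Fin N) R := J * Mᵀ * J with hM'def
  have hMinv : M * M' = 1 := by
    calc M * (J * Mᵀ * J) = (M * J * Mᵀ) * J := by
          simp only [Matrix.mul_assoc]
      _ = J * J := by rw [hM]
      _ = 1 := revJ_mul_revJ
  -- determinant of M is ±1
  have hJ2 : J.det * J.det = 1 := by
    rw [← Matrix.det_mul, revJ_mul_revJ, Matrix.det_one]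
  have h1 : M.det * J.det * M.det = J.det := by
    have := congrArg Matrix.det hM
    rw [Matrix.det_mul, Matrix.det_mul, Matrix.det_transpose] at this
    exact this
  have hdet2 : M.det * M.det = 1 := by
    linear_combination J.det * h1 + (1 - M.det * M.det) * hJ2
  have hdet : M.det = 1 ∨ M.det = -1 := mul_self_eq_one_iff.mp hdet2
  -- Jacobi-type identity
  set k := 2 * n + 2 - α with hk
  have hkl : k + α = N := by omega
  set e : (Fin k ⊕ Fin α) ≃ Fin N := finSumFinEquiv.trans (finCongr hkl) with he
  set Ms := M.submatrix e e with hMs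
  set Ms' := M'.submatrix e e with hMs'
  have hprod : Ms * Ms' = 1 := by
    rw [hMs, hMs', Matrix.submatrix_mul_equiv, hMinv, Matrix.submatrix_one_equiv]
  have hjac := jacobi_aux Ms Ms' hprod
  have hdetMs : Ms.det = M.det := Matrix.det_submatrix_equiv_self e M
  have hk2 : k ≤ 2 * n + 2 := by omega
  have hα2 : α ≤ 2 * n + 2 := by omega
  have hNW : Ms.toBlocks₁₁ = M.submatrix (Fin.castLE hk2) (Fin.castLE hk2) := by
    ext i j
    simp only [hMs, Matrix.toBlocks₁₁, Matrix.submatrix_apply, Matrix.of_apply]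
    congr 1 <;>
    · apply Fin.ext
      simp [he, finCongr_apply, Fin.coe_castLE]
  have hSE : Ms'.toBlocks₂₂ =
      ((M.submatrix (Fin.castLE hα2) (Fin.castLE hα2))ᵀ).submatrix
        (⇑(Fin.revPerm : Equiv.Perm (Fin α))) (⇑(Fin.revPerm : Equiv.Perm (Fin α))) := by
    refine Matrix.ext fun i j => ?_
    simp only [hMs', Matrix.toBlocks₂₂, Matrix.submatrix_apply, Matrix.of_apply,
      Matrix.transpose_apply, Fin.revPerm_apply]
    rw [hM'def]
    have h5 : (J * Mᵀ * J) (e (Sum.inr i)) (e (Sum.inr j)) =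
        M (Fin.rev (e (Sum.inr j))) (Fin.rev (e (Sum.inr i))) := by
      rw [mul_revJ, revJ_mul, Matrix.transpose_apply]
    rw [h5]
    have hx : Fin.rev (e (Sum.inr j)) = Fin.castLE hα2 (Fin.rev j) := by
      apply Fin.ext
      have hj := Fin.isLt j
      simp only [he, Equiv.trans_apply, finSumFinEquiv_apply_right, finCongr_apply,
        Fin.val_rev, Fin.coe_cast, Fin.coe_natAdd, Fin.coe_castLE]
      omega
    have hy : Fin.rev (e (Sum.inr i)) = Fin.castLE hα2 (Fin.rev i) := by
      apply Fin.ext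
      have hi := Fin.isLt i
      simp only [he, Equiv.trans_apply, finSumFinEquiv_apply_right, finCongr_apply,
        Fin.val_rev, Fin.coe_cast, Fin.coe_natAdd, Fin.coe_castLE]
      omega
    rw [hx, hy]
  have hdetSE : Ms'.toBlocks₂₂.det =
      (M.submatrix (Fin.castLE hα2) (Fin.castLE hα2)).det := by
    rw [hSE, Matrix.det_submatrix_equiv_self, Matrix.det_transpose]
  refine ⟨M.det, hdet, ?_⟩
  show (M.submatrix (Fin.castLE _) (Fin.castLE _)).det =
    M.det * (M.submatrix (Fin.castLE _) (Fin.castLE _)).det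
  calc (M.submatrix (Fin.castLE _) (Fin.castLE _)).det
      = Ms.toBlocks₁₁.det := by rw [hNW]
    _ = Ms.det * Ms'.toBlocks₂₂.det := hjac
    _ = M.det * (M.submatrix (Fin.castLE _) (Fin.castLE _)).det := by
        rw [hdetMs, hdetSE]
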